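/- For every natural number n ≥ 3, the fractional domatic number of the n-cycle Cₙ equals 3 if n ≡ 0 (mod 3), equals 3n/(n+2) if n ≡ 1 (mod 3), and equals 3n/(n+1) if n ≡ 2 (mod 3). -/

import Mathlib

open SimpleGraph

/-- A set of vertices `D` is dominating in `G` if every vertex not in `D`
has a neighbour in `D`. -/
def Dominating {V : Type*} (G : SimpleGraph V) (D : Finset V) : Prop :=
  ∀ v : V, v ∉ D → ∃ u ∈ D, G.Adj v u

/-- A `(k,s)`-configuration of `G`: a multiset of `k` dominating sets of `G`
such that every vertex belongs to at most `s` of them. -/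
def IsConfig {V : Type*} [DecidableEq V] (G : SimpleGraph V)
    (𝒟 : Multiset (Finset V)) (k s : ℕ) : Prop :=
  Multiset.card 𝒟 = k ∧ (∀ D ∈ 𝒟, Dominating G D) ∧
    ∀ v : V, 𝒟.countP (fun D => v ∈ D) ≤ s

/-- The fractional domatic number of `G`: the supremum (attained as a maximum) of `k/s`
over all natural numbers `k`, `s ≥ 1` such that `G` admits a `(k,s)`-configuration. -/
noncomputable def fracDomatic {V : Type*} [DecidableEq V] (G : SimpleGraph V) : ℝ :=
  sSup {x : ℝ | ∃ k s : ℕ, 0 < s ∧ (∃ 𝒟 : Multiset (Finset V), IsConfig G 𝒟 k s) ∧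
    x = (k : ℝ) / (s : ℝ)}



section Helpers
open Finset
variable {n : ℕ}

lemma card_range_filter_mod3 (n : ℕ) :
    ((Finset.range n).filter (fun i => i % 3 = 0)).card = (n + 2) / 3 := by
  induction n with
  | zero => simp
  | succ n ih =>
    rw [Finset.range_add_one, Finset.filter_insert]
    by_cases h : n % 3 = 0
    · rw [if_pos h, Finset.card_insert_of_notMem (by simp), ih]; omega
    · rw [if_neg h, ih]; omega

lemma card_D0 :
    ((Finset.univ : Finset (Fin n)).filter (fun v => v.val % 3 = 0)).card = (n + 2) / 3 := by
  rw [← card_range_filter_mod3 n]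
  apply Finset.card_nbij (i := Fin.val)
  · intro a ha
    have := a.isLt
    simp at ha ⊢
    omega
  · intro a ha b hb hab; exact Fin.ext hab
  · intro b hb
    simp only [Finset.coe_filter, Finset.mem_range, Set.mem_image, Set.mem_setOf_eq] at hb ⊢
    exact ⟨⟨b, hb.1⟩, ⟨by simp, hb.2⟩, rfl⟩

lemma D0_dominating (hn : 3 ≤ n) :
    Dominating (cycleGraph n) ((Finset.univ : Finset (Fin n)).filter (fun v => v.val % 3 = 0)) := by
  haveI : NeZero n := ⟨by omega⟩
  intro v hv
  simp only [Finset.mem_filter, Finset.mem_univ, true_and] at hv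
  have hvlt := v.isLt
  have h1 : ((1 : Fin n)).val = 1 := by rw [Fin.val_one', Nat.mod_eq_of_lt (by omega)]
  have hval : v.val % 3 = 1 ∨ v.val % 3 = 2 := by omega
  rcases hval with h | h
  · refine ⟨v - 1, ?_, ?_⟩
    · simp only [Finset.mem_filter, Finset.mem_univ, true_and]
      have hsub : (v - 1).val = (n - (1 : Fin n).val + v.val) % n := by
        have := congrArg Fin.val (Fin.sub_def v 1)
        simpa using this
      rw [h1] at hsub
      rw [Nat.mod_eq_sub_mod (by omega), Nat.mod_eq_of_lt (by omega)] at hsub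
      omega
    · rw [cycleGraph_adj']
      left
      rw [sub_sub_cancel, h1]
  · refine ⟨v + 1, ?_, ?_⟩
    · simp only [Finset.mem_filter, Finset.mem_univ, true_and]
      have hadd : (v + 1).val = (v.val + 1) % n := by rw [Fin.val_add, h1]
      rw [hadd]
      rcases Nat.lt_or_ge (v.val + 1) n with hc | hc
      · rw [Nat.mod_eq_of_lt hc]; omega
      · have hc' : v.val + 1 = n := by omega
        rw [hc', Nat.mod_self]
    · rw [cycleGraph_adj']
      right
      rw [add_sub_cancel_left, h1]

lemma dominating_shift (hn : 3 ≤ n) (D : Finset (Fin n))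
    (hD : Dominating (cycleGraph n) D) (c : Fin n) :
    Dominating (cycleGraph n) (D.image (· + c)) := by
  haveI : NeZero n := ⟨by omega⟩
  intro v hv
  have hvc : v - c ∉ D := by
    intro h; exact hv (Finset.mem_image.2 ⟨v - c, h, by simp⟩)
  obtain ⟨u, hu, hadj⟩ := hD (v - c) hvc
  refine ⟨u + c, Finset.mem_image.2 ⟨u, hu, rfl⟩, ?_⟩
  rw [cycleGraph_adj'] at hadj ⊢
  have e1 : v - (u + c) = (v - c) - u := by abel
  have e2 : (u + c) - v = u - (v - c) := by abel
  rw [e1, e2]; exact hadj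

lemma count_shift [NeZero n] (D : Finset (Fin n)) (v : Fin n) :
    (((Finset.univ : Finset (Fin n)).val.map (fun c => D.image (· + c))).countP
      (fun E => v ∈ E)) = D.card := by
  rw [Multiset.countP_map]
  have hmem : ∀ c : Fin n, (v ∈ D.image (· + c)) ↔ (v - c ∈ D) := by
    intro c
    rw [Finset.mem_image]
    constructor
    · rintro ⟨u, hu, rfl⟩; simpa using hu
    · intro h; exact ⟨v - c, h, by simp⟩
  have : ((Finset.univ : Finset (Fin n)).val.filter (fun c => v ∈ D.image (· + c)))
      = ((Finset.univ : Finset (Fin n)).filter (fun c => v - c ∈ D)).val := by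
    rw [Finset.filter_val]
    apply Multiset.filter_congr
    intro c _
    exact hmem c
  rw [this]
  show ((Finset.univ : Finset (Fin n)).filter (fun c => v - c ∈ D)).card = D.card
  apply Finset.card_nbij' (i := fun c => v - c) (j := fun d => v - d)
  · intro a ha; simpa using ha
  · intro a ha; simpa [sub_sub_cancel] using ha
  · intro a ha; simp [sub_sub_cancel]
  · intro a ha; simp [sub_sub_cancel]

lemma sum_card_eq (𝒟 : Multiset (Finset (Fin n))) :
    (𝒟.map Finset.card).sum = ∑ v : Fin n, 𝒟.countP (fun D => v ∈ D) := by
  induction 𝒟 using Multiset.induction with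
  | empty => simp
  | cons D t ih =>
    simp only [Multiset.map_cons, Multiset.sum_cons, Multiset.countP_cons, ih]
    rw [Finset.sum_add_distrib, add_comm]
    congr 1
    rw [← Finset.card_filter]
    congr 1
    ext v
    simp

lemma le_card_dominating (hn : 3 ≤ n) (D : Finset (Fin n))
    (hD : Dominating (cycleGraph n) D) : n ≤ 3 * D.card := by
  haveI : NeZero n := ⟨by omega⟩
  classical
  have h1 : ((1 : Fin n)).val = 1 := by rw [Fin.val_one', Nat.mod_eq_of_lt (by omega)]
  choose f hf1 hf2 using hD
  set g : Fin n → Fin n := fun v => if h : v ∈ D then v else f v h with hg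
  have hmaps : ∀ v, g v ∈ D := by
    intro v
    rw [hg]
    by_cases h : v ∈ D
    · simpa [h]
    · simpa [h] using hf1 v h
  have himg : (Finset.univ : Finset (Fin n)).image g ⊆ D := by
    intro u hu
    obtain ⟨v, _, rfl⟩ := Finset.mem_image.1 hu
    exact hmaps v
  have hcard : (Finset.univ : Finset (Fin n)).card ≤
      3 * ((Finset.univ : Finset (Fin n)).image g).card := by
    apply Finset.card_le_mul_card_image
    intro u hu
    have hsub : (Finset.univ : Finset (Fin n)).filter (fun v => g v = u)
        ⊆ {u - 1, u, u + 1} := by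
      intro v hv
      simp only [Finset.mem_filter, Finset.mem_univ, true_and] at hv
      by_cases h : v ∈ D
      · have : v = u := by rw [hg] at hv; simpa [h] using hv
        simp [this]
      · have hadj : (cycleGraph n).Adj v u := by
          have := hf2 v h
          have hgv : g v = f v h := by rw [hg]; simp [h]
          rwa [← hgv, hv] at this
        rw [cycleGraph_adj'] at hadj
        simp only [Finset.mem_insert, Finset.mem_singleton]
        rcases hadj with h' | h'
        · right; right
          have : v - u = 1 := Fin.ext (by rw [h1]; exact h')
          rw [← this]; abel
        · left
          have : u - v = 1 := Fin.ext (by rw [h1]; exact h')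
          have : v = u - 1 := by rw [← this]; abel
          exact this
    calc ((Finset.univ : Finset (Fin n)).filter (fun v => g v = u)).card
        ≤ ({u - 1, u, u + 1} : Finset (Fin n)).card := Finset.card_le_card hsub
      _ ≤ 3 := by
          apply le_trans (Finset.card_insert_le _ _)
          apply Nat.succ_le_succ
          apply le_trans (Finset.card_insert_le _ _)
          simp
  calc n = (Finset.univ : Finset (Fin n)).card := by simp
    _ ≤ 3 * ((Finset.univ : Finset (Fin n)).image g).card := hcard
    _ ≤ 3 * D.card := by
        apply Nat.mul_le_mul_left
        exact Finset.card_le_card himg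

lemma config_bound (hn : 3 ≤ n) {k s : ℕ} (𝒟 : Multiset (Finset (Fin n)))
    (hc : IsConfig (cycleGraph n) 𝒟 k s) : k * ((n + 2) / 3) ≤ n * s := by
  obtain ⟨hcard, hdom, hcount⟩ := hc
  have h1 : k * ((n + 2) / 3) ≤ (𝒟.map Finset.card).sum := by
    have := Multiset.card_nsmul_le_sum (s := 𝒟.map Finset.card) (a := (n + 2) / 3) ?_
    · simpa [hcard, smul_eq_mul] using this
    · intro x hx
      obtain ⟨D, hD, rfl⟩ := Multiset.mem_map.1 hx
      have := le_card_dominating hn D (hdom D hD)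
      omega
  have h2 : (𝒟.map Finset.card).sum ≤ n * s := by
    rw [sum_card_eq]
    calc ∑ v : Fin n, 𝒟.countP (fun D => v ∈ D) ≤ ∑ _v : Fin n, s :=
          Finset.sum_le_sum (fun v _ => hcount v)
      _ = n * s := by simp [Finset.sum_const, mul_comm]
  omega

lemma frac_eq (n : ℕ) (hn : 3 ≤ n) :
    fracDomatic (cycleGraph n) = (n : ℝ) / ((((n + 2) / 3 : ℕ)) : ℝ) := by
  haveI : NeZero n := ⟨by omega⟩
  set m := (n + 2) / 3 with hm
  have hm0 : 0 < m := by omega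
  have hconfig : IsConfig (cycleGraph n)
      ((Finset.univ : Finset (Fin n)).val.map
        (fun c => ((Finset.univ : Finset (Fin n)).filter
          (fun v => v.val % 3 = 0)).image (· + c))) n m := by
    refine ⟨?_, ?_, ?_⟩
    · simp
    · intro D hD
      obtain ⟨c, _, rfl⟩ := Multiset.mem_map.1 hD
      exact dominating_shift hn _ (D0_dominating hn) c
    · intro v
      rw [count_shift, card_D0]
  set S : Set ℝ := {x : ℝ | ∃ k s : ℕ, 0 < s ∧
      (∃ 𝒟 : Multiset (Finset (Fin n)), IsConfig (cycleGraph n) 𝒟 k s) ∧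
      x = (k : ℝ) / (s : ℝ)} with hS
  have hmem : (n : ℝ) / (m : ℝ) ∈ S := ⟨n, m, hm0, ⟨_, hconfig⟩, rfl⟩
  have hub : ∀ x ∈ S, x ≤ (n : ℝ) / (m : ℝ) := by
    rintro x ⟨k, s, hs, ⟨𝒟, hc⟩, rfl⟩
    have hb := config_bound hn 𝒟 hc
    rw [div_le_div_iff₀ (by positivity) (by exact_mod_cast hm0)]
    exact_mod_cast hb
  have : fracDomatic (cycleGraph n) = sSup S := rfl
  rw [this]
  exact le_antisymm (csSup_le ⟨_, hmem⟩ hub) (le_csSup ⟨_, hub⟩ hmem)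

end Helpers

/-- The fractional domatic number of the cycle `Cₙ`, `n ≥ 3`: it equals `3` if
`n ≡ 0 (mod 3)`, equals `3n/(n+2)` if `n ≡ 1 (mod 3)`, and equals `3n/(n+1)` if
`n ≡ 2 (mod 3)`. -/
theorem stmt_4 (n : ℕ) (hn : 3 ≤ n) :
    (n % 3 = 0 → fracDomatic (cycleGraph n) = 3) ∧
    (n % 3 = 1 → fracDomatic (cycleGraph n) = 3 * (n : ℝ) / ((n : ℝ) + 2)) ∧
    (n % 3 = 2 → fracDomatic (cycleGraph n) = 3 * (n : ℝ) / ((n : ℝ) + 1)) := by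
  rw [frac_eq n hn]
  have hm0 : 0 < (n + 2) / 3 := by omega
  have hmR : (0 : ℝ) < (((n + 2) / 3 : ℕ) : ℝ) := by exact_mod_cast hm0
  have hnR : (0 : ℝ) < (n : ℝ) := by
    have : 0 < n := by omega
    exact_mod_cast this
  refine ⟨?_, ?_, ?_⟩
  · intro h
    have : n = 3 * ((n + 2) / 3) := by omega
    have hcast : (n : ℝ) = 3 * (((n + 2) / 3 : ℕ) : ℝ) := by exact_mod_cast this
    rw [hcast, mul_div_assoc, div_self (ne_of_gt hmR), mul_one]
  · intro h
    have : n + 2 = 3 * ((n + 2) / 3) := by omega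
    have hcast : (n : ℝ) + 2 = 3 * (((n + 2) / 3 : ℕ) : ℝ) := by exact_mod_cast this
    rw [hcast, mul_div_mul_left _ _ (by norm_num)]
  · intro h
    have : n + 1 = 3 * ((n + 2) / 3) := by omega
    have hcast : (n : ℝ) + 1 = 3 * (((n + 2) / 3 : ℕ) : ℝ) := by exact_mod_cast this
    rw [hcast, mul_div_mul_left _ _ (by norm_num)]
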